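/- Let g : ℝ → ℝ be four times continuously differentiable on a neighborhood of l with g(l) = 0 and g'(l) ≠ 0. Define Θ(x) = x - g(x)/g'(l) + g(x)²·g''(l)/(2·g'(l)³) - g(x)³·(3·g''(l)² - g'(l)·g'''(l))/(6·g'(l)⁵). Then Θ(l) = l, Θ'(l) = 0, Θ''(l) = 0, and Θ'''(l) = 0. -/

import Mathlib

theorem stmt_6 (g : ℝ → ℝ) (l : ℝ) (hg : ContDiffAt ℝ 4 g l)
    (hgl : g l = 0) (hg' : deriv g l ≠ 0) :
    let Θ : ℝ → ℝ := fun x =>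
      x - g x / deriv g l + g x ^ 2 * iteratedDeriv 2 g l / (2 * (deriv g l) ^ 3)
        - g x ^ 3 * (3 * (iteratedDeriv 2 g l) ^ 2 - deriv g l * iteratedDeriv 3 g l)
          / (6 * (deriv g l) ^ 5)
    Θ l = l ∧ deriv Θ l = 0 ∧ iteratedDeriv 2 Θ l = 0 ∧ iteratedDeriv 3 Θ l = 0 := by
  intro Θ
  -- notation
  set A := deriv g l with hA
  set B := iteratedDeriv 2 g l with hB
  set C := iteratedDeriv 3 g l with hC
  have hB' : B = deriv (deriv g) l := by rw [hB, iteratedDeriv_succ, iteratedDeriv_one]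
  have hC' : C = deriv (deriv (deriv g)) l := by
    rw [hC, iteratedDeriv_succ, iteratedDeriv_succ, iteratedDeriv_one]
  set K := 3 * B ^ 2 - A * C with hK
  -- get an open set where g is C⁴
  obtain ⟨u, hu, hgu⟩ := hg.contDiffOn (le_refl _) (by norm_num)
  set s := interior u with hs
  have hso : IsOpen s := isOpen_interior
  have hls : l ∈ s := mem_interior_iff_mem_nhds.2 hu
  have hgs : ContDiffOn ℝ 4 g s := hgu.mono interior_subset
  have hsn : s ∈ nhds l := hso.mem_nhds hls
  -- differentiability facts
  have hgd : ∀ x ∈ s, DifferentiableAt ℝ g x := fun x hx =>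
    (hgs.differentiableOn (by norm_num)).differentiableAt (hso.mem_nhds hx)
  have hg1 : ContDiffOn ℝ 3 (deriv g) s :=
    ((contDiffOn_succ_iff_deriv_of_isOpen hso).1
      (hgs.of_le (by norm_num))).2.2
  have hg1d : ∀ x ∈ s, DifferentiableAt ℝ (deriv g) x := fun x hx =>
    (hg1.differentiableOn (by norm_num)).differentiableAt (hso.mem_nhds hx)
  have hg2 : ContDiffOn ℝ 2 (deriv (deriv g)) s :=
    ((contDiffOn_succ_iff_deriv_of_isOpen hso).1
      (hg1.of_le (by norm_num))).2.2
  have hg2d : ∀ x ∈ s, DifferentiableAt ℝ (deriv (deriv g)) x := fun x hx =>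
    (hg2.differentiableOn (by norm_num)).differentiableAt (hso.mem_nhds hx)
  -- first derivative
  set D1 : ℝ → ℝ := fun x =>
    1 - deriv g x / A + 2 * g x * deriv g x * B / (2 * A ^ 3)
      - 3 * g x ^ 2 * deriv g x * K / (6 * A ^ 5) with hD1def
  have hD1 : ∀ x ∈ s, HasDerivAt Θ (D1 x) x := by
    intro x hx
    have hgx := (hgd x hx).hasDerivAt
    have h := (((hasDerivAt_id x).sub (hgx.div_const A)).add
        (((hgx.pow 2).mul_const B).div_const (2 * A ^ 3))).sub
        (((hgx.pow 3).mul_const K).div_const (6 * A ^ 5))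
    convert (show HasDerivAt Θ _ x from h) using 1
    push_cast
    ring
  have hΘ'eq : deriv Θ =ᶠ[nhds l] D1 :=
    Filter.eventuallyEq_of_mem hsn (fun x hx => (hD1 x hx).deriv)
  have h1 : deriv Θ l = 0 := by
    rw [(hD1 l hls).deriv, hD1def]
    simp only [hgl, ← hA]
    field_simp
    ring
  -- second derivative
  set D2 : ℝ → ℝ := fun x =>
    -(deriv (deriv g) x / A)
      + (2 * (deriv g x * deriv g x + g x * deriv (deriv g) x)) * B / (2 * A ^ 3)
      - (3 * (2 * g x * deriv g x * deriv g x + g x ^ 2 * deriv (deriv g) x)) * K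
          / (6 * A ^ 5) with hD2def
  have hD2 : ∀ x ∈ s, HasDerivAt D1 (D2 x) x := by
    intro x hx
    have hgx := (hgd x hx).hasDerivAt
    have hg1x := (hg1d x hx).hasDerivAt
    have h := (((hasDerivAt_const x (1:ℝ)).sub (hg1x.div_const A)).add
        (((((hasDerivAt_const x (2:ℝ)).mul hgx).mul hg1x).mul_const B).div_const (2 * A ^ 3))).sub
        ((((hasDerivAt_const x (3:ℝ)).mul (hgx.pow 2) |>.mul hg1x).mul_const K).div_const
          (6 * A ^ 5))
    convert (show HasDerivAt D1 _ x from h) using 1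
    push_cast
    simp only [Pi.mul_apply, Pi.pow_apply]
    ring
  have hΘ''eq : deriv (deriv Θ) =ᶠ[nhds l] D2 := by
    have h := hΘ'eq.deriv
    refine h.trans (Filter.eventuallyEq_of_mem hsn (fun x hx => (hD2 x hx).deriv))
  have h2 : iteratedDeriv 2 Θ l = 0 := by
    rw [iteratedDeriv_succ, iteratedDeriv_one, hΘ''eq.self_of_nhds, hD2def]
    simp only [hgl, ← hB']
    field_simp
    ring
  -- third derivative
  have h3 : iteratedDeriv 3 Θ l = 0 := by
    rw [iteratedDeriv_succ, iteratedDeriv_succ, iteratedDeriv_one, hΘ''eq.deriv.self_of_nhds]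
    have hgx := (hgd l hls).hasDerivAt
    have hg1x := (hg1d l hls).hasDerivAt
    have hg2x := (hg2d l hls).hasDerivAt
    have h := ((hg2x.div_const A).neg.add
        ((((hasDerivAt_const l (2:ℝ)).mul ((hg1x.mul hg1x).add (hgx.mul hg2x))).mul_const
          B).div_const (2 * A ^ 3))).sub
        ((((hasDerivAt_const l (3:ℝ)).mul
            (((((hasDerivAt_const l (2:ℝ)).mul hgx).mul hg1x).mul hg1x).add
              ((hgx.pow 2).mul hg2x))).mul_const K).div_const (6 * A ^ 5))
    rw [(show HasDerivAt D2 _ l from h).deriv]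
    simp only [hgl, ← hB', ← hC', hK, Pi.mul_apply, Pi.pow_apply, ← hA]
    field_simp
    ring
  exact ⟨by simp [Θ, hgl], h1, h2, h3⟩
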